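/- Let μ ∈ L¹(ℝ²) with ∫_{ℝ²} μ(x) dx = 0. Then the heat semigroup applied to μ decays in L¹ at infinity in time: lim_{t→∞} ∫_{ℝ²} | ∫_{ℝ²} Γ(x−y,t) μ(y) dy | dx = 0. -/

import Mathlib

open MeasureTheory Real
open scoped ENNReal

noncomputable section

/-- The open upper half plane ℝ²₊ = {x : x₂ > 0}. -/
def upperHalf : Set (ℝ × ℝ) := {x | 0 < x.2}

/-- 2D heat kernel Γ(x,t) = (4πt)⁻¹ exp(−|x|²/(4t)). -/
def heatK (x : ℝ × ℝ) (t : ℝ) : ℝ :=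
  (4 * π * t)⁻¹ * Real.exp (-(x.1 ^ 2 + x.2 ^ 2) / (4 * t))

/-- 1D heat kernel Γ₀(r,t) = (4πt)^{-1/2} exp(−r²/(4t)). -/
def heatK1 (r t : ℝ) : ℝ :=
  (Real.sqrt (4 * π * t))⁻¹ * Real.exp (-r ^ 2 / (4 * t))

/-- ∂²_{z₁} E(z) = (z₁² − z₂²)/(2π|z|⁴), for E(z) = −(2π)⁻¹ log|z|. -/
def d2E (z : ℝ × ℝ) : ℝ :=
  (z.1 ^ 2 - z.2 ^ 2) / (2 * π * (z.1 ^ 2 + z.2 ^ 2) ^ 2)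

/-- Poisson kernel P_s(r) = s/(π(r²+s²)). -/
def Pker (s r : ℝ) : ℝ := s / (π * (r ^ 2 + s ^ 2))

/-- Conjugate Poisson kernel Q_s(r) = r/(π(r²+s²)). -/
def Qker (s r : ℝ) : ℝ := r / (π * (r ^ 2 + s ^ 2))

/-- ∇⊥E(z) = (∂₂E(z), −∂₁E(z)) for E(z) = −(2π)⁻¹ log|z|. -/
def gradPerpE (z : ℝ × ℝ) : ℝ × ℝ :=
  (-z.2 / (2 * π * (z.1 ^ 2 + z.2 ^ 2)), z.1 / (2 * π * (z.1 ^ 2 + z.2 ^ 2)))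

/-- The Biot–Savart kernel ∇⊥_x D(x,y) = ∇⊥E(x−y) − ∇⊥E(x−y*). -/
def bsKernel (x y : ℝ × ℝ) : ℝ × ℝ :=
  gradPerpE (x.1 - y.1, x.2 - y.2) - gradPerpE (x.1 - y.1, x.2 + y.2)

/-- Integral of a real function against a finite signed measure (via Jordan decomposition). -/
def sInt (μ : SignedMeasure (ℝ × ℝ)) (f : ℝ × ℝ → ℝ) : ℝ :=
  (∫ y, f y ∂μ.toJordanDecomposition.posPart) - ∫ y, f y ∂μ.toJordanDecomposition.negPart

/-- Integral of a vector-valued function against a finite signed measure. -/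
def sIntV (μ : SignedMeasure (ℝ × ℝ)) (f : ℝ × ℝ → ℝ × ℝ) : ℝ × ℝ :=
  (∫ y, f y ∂μ.toJordanDecomposition.posPart) - ∫ y, f y ∂μ.toJordanDecomposition.negPart

/-- Total variation norm ‖μ‖_M of a finite signed measure. -/
def normM (μ : SignedMeasure (ℝ × ℝ)) : ℝ := (μ.totalVariation Set.univ).toReal

/-- The vorticity kernel W(x,y,t). -/
def Wk (x y : ℝ × ℝ) (t : ℝ) : ℝ :=
  heatK (x.1 - y.1, x.2 - y.2) t + heatK (x.1 - y.1, x.2 + y.2) t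
    + 4 * ∫ z₂ in (0:ℝ)..y.2, ∫ z₁ : ℝ, heatK (x.1 - z₁, x.2 + z₂) t * d2E (z₁ - y.1, z₂ - y.2)
    - 2 * heatK1 x.2 t * ∫ z₁ : ℝ, heatK1 (x.1 - z₁) t * Pker y.2 (z₁ - y.1)

/-- T(t)ω₀(x) = ∫ W(x,y,t) dω₀(y) for a finite signed measure ω₀. -/
def Tsg (ω₀ : SignedMeasure (ℝ × ℝ)) (t : ℝ) (x : ℝ × ℝ) : ℝ :=
  sInt ω₀ (fun y => Wk x y t)

/-- The boundary trace operator T₁μ(x₁) = π⁻¹ ∫ y₂/((x₁−y₁)²+y₂²) dμ(y). -/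
def T1op (μ : SignedMeasure (ℝ × ℝ)) (x₁ : ℝ) : ℝ :=
  π⁻¹ * sInt μ (fun y => y.2 / ((x₁ - y.1) ^ 2 + y.2 ^ 2))

lemma heatK_eq (x : ℝ × ℝ) {t : ℝ} (ht : 0 < t) :
    heatK x t = (4 * π * t)⁻¹ * (Real.exp (-(4*t)⁻¹ * x.1 ^ 2) * Real.exp (-(4*t)⁻¹ * x.2 ^ 2)) := by
  rw [heatK, ← Real.exp_add]
  ring_nf

lemma heatK_nonneg (x : ℝ × ℝ) {t : ℝ} (ht : 0 < t) : 0 ≤ heatK x t := by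
  have : (0:ℝ) ≤ (4 * π * t)⁻¹ := by positivity
  exact mul_nonneg this (Real.exp_nonneg _)

lemma heatK_cont {t : ℝ} : Continuous fun x : ℝ × ℝ => heatK x t := by
  unfold heatK; fun_prop

lemma heatK_integrable {t : ℝ} (ht : 0 < t) : Integrable (fun x : ℝ × ℝ => heatK x t) := by
  have hb : (0:ℝ) < (4*t)⁻¹ := by positivity
  have h1 : Integrable (fun x : ℝ × ℝ =>
      Real.exp (-(4*t)⁻¹ * x.1 ^ 2) * Real.exp (-(4*t)⁻¹ * x.2 ^ 2)) := by
    rw [Measure.volume_eq_prod ℝ ℝ]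
    exact (integrable_exp_neg_mul_sq hb).mul_prod (integrable_exp_neg_mul_sq hb)
  have := h1.const_mul ((4 * π * t)⁻¹)
  exact this.congr (Filter.Eventually.of_forall fun x => (heatK_eq x ht).symm)

lemma heatK_integral {t : ℝ} (ht : 0 < t) : ∫ x : ℝ × ℝ, heatK x t = 1 := by
  have hb : (0:ℝ) < (4*t)⁻¹ := by positivity
  have : ∫ x : ℝ × ℝ, heatK x t = (4 * π * t)⁻¹ *
      ∫ x : ℝ × ℝ, Real.exp (-(4*t)⁻¹ * x.1 ^ 2) * Real.exp (-(4*t)⁻¹ * x.2 ^ 2) := by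
    rw [← integral_const_mul]
    exact integral_congr_ae (Filter.Eventually.of_forall fun x => heatK_eq x ht)
  have hpm := integral_prod_mul (μ := (volume : Measure ℝ)) (ν := (volume : Measure ℝ))
    (f := fun a : ℝ => Real.exp (-(4*t)⁻¹ * a ^ 2)) (g := fun a : ℝ => Real.exp (-(4*t)⁻¹ * a ^ 2))
  rw [this, Measure.volume_eq_prod ℝ ℝ, hpm, integral_gaussian,
    Real.mul_self_sqrt (by positivity : (0:ℝ) ≤ π / (4*t)⁻¹)]
  have hπ : π ≠ 0 := Real.pi_ne_zero
  field_simp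

lemma sqrt_inv_tendsto_zero : Filter.Tendsto (fun t : ℝ => (Real.sqrt t)⁻¹) Filter.atTop (nhds 0) := by
  apply Filter.Tendsto.comp tendsto_inv_atTop_zero
  apply Filter.tendsto_atTop_atTop.2
  intro b
  exact ⟨b ^ 2, fun a ha => le_trans (le_abs_self b) (by
    rw [← Real.sqrt_sq_eq_abs]; exact Real.sqrt_le_sqrt ha)⟩

lemma heatK_scale (x : ℝ × ℝ) {t : ℝ} (ht : 0 < t) :
    heatK x t = t⁻¹ * heatK ((Real.sqrt t)⁻¹ • x) 1 := by
  have hst : Real.sqrt t ^ 2 = t := Real.sq_sqrt ht.le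
  have hs : 0 < Real.sqrt t := Real.sqrt_pos.2 ht
  unfold heatK
  rw [Prod.smul_fst, Prod.smul_snd, smul_eq_mul, smul_eq_mul]
  rw [mul_pow, mul_pow, inv_pow, hst]
  rw [show -(t⁻¹ * x.1 ^ 2 + t⁻¹ * x.2 ^ 2) / (4 * 1) = -(x.1 ^ 2 + x.2 ^ 2) / (4 * t) by
    field_simp]
  rw [mul_one]
  rw [mul_inv, ← mul_assoc]
  congr 1
  field_simp

/-- translation-difference L¹ function at time 1 -/
def gfun (v : ℝ × ℝ) : ℝ := ∫ z : ℝ × ℝ, |heatK (z - v) 1 - heatK z 1|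

lemma f_scale (y : ℝ × ℝ) {t : ℝ} (ht : 0 < t) :
    (∫ x : ℝ × ℝ, |heatK (x - y) t - heatK x t|) = gfun ((Real.sqrt t)⁻¹ • y) := by
  have hs : 0 < Real.sqrt t := Real.sqrt_pos.2 ht
  have hst : Real.sqrt t ^ 2 = t := Real.sq_sqrt ht.le
  have key : ∀ x : ℝ × ℝ, |heatK (x - y) t - heatK x t|
      = t⁻¹ * |heatK ((Real.sqrt t)⁻¹ • x - (Real.sqrt t)⁻¹ • y) 1
          - heatK ((Real.sqrt t)⁻¹ • x) 1| := by
    intro x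
    rw [heatK_scale (x - y) ht, heatK_scale x ht, ← mul_sub, abs_mul,
      abs_of_nonneg (by positivity : (0:ℝ) ≤ t⁻¹), smul_sub]
  calc (∫ x : ℝ × ℝ, |heatK (x - y) t - heatK x t|)
      = ∫ x : ℝ × ℝ, t⁻¹ * |heatK ((Real.sqrt t)⁻¹ • x - (Real.sqrt t)⁻¹ • y) 1
          - heatK ((Real.sqrt t)⁻¹ • x) 1| := integral_congr_ae (.of_forall key)
    _ = t⁻¹ * ∫ x : ℝ × ℝ, (fun z => |heatK (z - (Real.sqrt t)⁻¹ • y) 1 - heatK z 1|)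
          ((Real.sqrt t)⁻¹ • x) := by rw [integral_const_mul]
    _ = gfun ((Real.sqrt t)⁻¹ • y) := by
        rw [MeasureTheory.Measure.integral_comp_inv_smul volume
          (fun z => |heatK (z - (Real.sqrt t)⁻¹ • y) 1 - heatK z 1|) (Real.sqrt t)]
        rw [show Module.finrank ℝ (ℝ × ℝ) = 2 by simp]
        rw [hst, abs_of_pos ht, smul_eq_mul, ← mul_assoc, inv_mul_cancel₀ ht.ne', one_mul]
        rfl

lemma heatK_shift_bound {z v : ℝ × ℝ} (hv : ‖v‖ ≤ 1) :
    heatK (z - v) 1 ≤ (4 * π)⁻¹ * Real.exp (1/2) * (8 * π) * heatK z 2 := by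
  have h1 : |v.1| ≤ 1 := le_trans (by exact norm_fst_le v) hv
  have h2 : |v.2| ≤ 1 := le_trans (by exact norm_snd_le v) hv
  have hq : (z.1 - v.1) ^ 2 + (z.2 - v.2) ^ 2 ≥ (z.1 ^ 2 + z.2 ^ 2) / 2 - 2 := by
    have e1 : v.1 ^ 2 ≤ 1 := by nlinarith [abs_nonneg v.1, sq_abs v.1]
    have e2 : v.2 ^ 2 ≤ 1 := by nlinarith [abs_nonneg v.2, sq_abs v.2]
    nlinarith [sq_nonneg (z.1 - 2 * v.1), sq_nonneg (z.2 - 2 * v.2)]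
  have : heatK (z - v) 1 ≤ (4 * π)⁻¹ * Real.exp (1/2 - (z.1 ^ 2 + z.2 ^ 2) / 8) := by
    unfold heatK
    rw [mul_one]
    apply mul_le_mul_of_nonneg_left _ (by positivity)
    apply Real.exp_le_exp.2
    have : (z - v).1 = z.1 - v.1 := rfl
    have h2' : (z - v).2 = z.2 - v.2 := rfl
    rw [this, h2']
    nlinarith [hq]
  refine this.trans (le_of_eq ?_)
  unfold heatK
  rw [Real.exp_sub]
  have hπ : π ≠ 0 := Real.pi_ne_zero
  rw [show -(z.1 ^ 2 + z.2 ^ 2) / (4 * 2) = -((z.1 ^ 2 + z.2 ^ 2) / 8) by ring,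
    Real.exp_neg]
  field_simp
  ring

lemma gfun_tendsto : Filter.Tendsto gfun (nhds 0) (nhds 0) := by
  have h0 : (0:ℝ) = ∫ _z : ℝ × ℝ, (0:ℝ) := by simp
  rw [h0]
  apply tendsto_integral_filter_of_dominated_convergence
    (fun z => (4 * π)⁻¹ * Real.exp (1/2) * (8 * π) * heatK z 2 + heatK z 1)
  · apply Filter.Eventually.of_forall
    intro v
    apply Continuous.aestronglyMeasurable
    exact ((heatK_cont.comp (continuous_id.sub continuous_const)).sub heatK_cont).abs
  · have : ∀ᶠ v : ℝ × ℝ in nhds 0, ‖v‖ ≤ 1 := by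
      have := Metric.closedBall_mem_nhds (0 : ℝ × ℝ) one_pos
      filter_upwards [this] with v hv
      simpa [Metric.mem_closedBall, dist_zero_right] using hv
    filter_upwards [this] with v hv
    apply Filter.Eventually.of_forall
    intro z
    rw [Real.norm_eq_abs, abs_abs]
    refine (abs_sub _ _).trans ?_
    gcongr
    · rw [abs_of_nonneg (heatK_nonneg _ one_pos)]
      exact heatK_shift_bound hv
    · rw [abs_of_nonneg (heatK_nonneg _ one_pos)]
  · exact ((heatK_integrable two_pos).const_mul _).add (heatK_integrable one_pos)
  · apply Filter.Eventually.of_forall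
    intro z
    have hc : Continuous fun v : ℝ × ℝ => |heatK (z - v) 1 - heatK z 1| :=
      ((heatK_cont.comp (continuous_const.sub continuous_id)).sub continuous_const).abs
    have := hc.tendsto 0
    simpa using this

lemma gfun_measurable : StronglyMeasurable gfun := by
  apply MeasureTheory.StronglyMeasurable.integral_prod_right'
    (f := fun p : (ℝ × ℝ) × (ℝ × ℝ) => |heatK (p.2 - p.1) 1 - heatK p.2 1|)
  apply Continuous.stronglyMeasurable
  exact ((heatK_cont.comp (continuous_snd.sub continuous_fst)).sub
    (heatK_cont.comp continuous_snd)).abs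

lemma heatK_le (z : ℝ × ℝ) {t : ℝ} (ht : 0 < t) : ‖heatK z t‖ ≤ (4 * π * t)⁻¹ := by
  rw [Real.norm_eq_abs, abs_of_nonneg (heatK_nonneg z ht)]
  unfold heatK
  nth_rewrite 2 [show (4 * π * t)⁻¹ = (4 * π * t)⁻¹ * 1 by ring]
  apply mul_le_mul_of_nonneg_left _ (by positivity)
  apply Real.exp_le_one_iff.2
  have : 0 ≤ z.1 ^ 2 + z.2 ^ 2 := by positivity
  apply div_nonpos_of_nonpos_of_nonneg <;> [linarith; positivity]

lemma gfun_le_two (v : ℝ × ℝ) : gfun v ≤ 2 := by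
  have hint : Integrable (fun z : ℝ × ℝ => heatK (z - v) 1) :=
    (heatK_integrable one_pos).comp_sub_right v
  have : gfun v ≤ ∫ z : ℝ × ℝ, (heatK (z - v) 1 + heatK z 1) := by
    apply integral_mono_of_nonneg (.of_forall fun z => abs_nonneg _)
      (hint.add (heatK_integrable one_pos))
    apply Filter.Eventually.of_forall
    intro z
    refine (abs_sub _ _).trans ?_
    rw [abs_of_nonneg (heatK_nonneg _ one_pos), abs_of_nonneg (heatK_nonneg _ one_pos)]
    exact le_refl _
  refine this.trans (le_of_eq ?_)
  rw [integral_add hint (heatK_integrable one_pos),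
    integral_sub_right_eq_self (fun z : ℝ × ℝ => heatK z 1) v, heatK_integral one_pos]
  norm_num

lemma gfun_nonneg (v : ℝ × ℝ) : 0 ≤ gfun v := integral_nonneg fun z => abs_nonneg _


/-- for μ ∈ L¹(ℝ²) with zero total mass, ‖e^{tΔ}μ‖_{L¹(ℝ²)} → 0 as t → ∞. -/
theorem heat_L1_decay_zero_mass (μ : ℝ × ℝ → ℝ) (hμ : Integrable μ)
    (h0 : (∫ x : ℝ × ℝ, μ x) = 0) :
    Filter.Tendsto
      (fun t => ∫ x : ℝ × ℝ, |∫ y : ℝ × ℝ, heatK (x.1 - y.1, x.2 - y.2) t * μ y|)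
      Filter.atTop (nhds 0) := by
  set B : ℝ → ℝ := fun t => ∫ y : ℝ × ℝ, gfun ((Real.sqrt t)⁻¹ • y) * ‖μ y‖ with hBdef
  have hBtend : Filter.Tendsto B Filter.atTop (nhds 0) := by
    rw [show (0:ℝ) = ∫ (_ : ℝ × ℝ), (0:ℝ) by simp]
    apply tendsto_integral_filter_of_dominated_convergence (fun y => 2 * ‖μ y‖)
    · apply Filter.Eventually.of_forall
      intro t
      exact ((gfun_measurable.comp_measurable
        (continuous_const_smul ((Real.sqrt t)⁻¹)).measurable).aestronglyMeasurable.mul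
        hμ.1.norm)
    · apply Filter.Eventually.of_forall
      intro t
      apply Filter.Eventually.of_forall
      intro y
      rw [Real.norm_eq_abs, abs_of_nonneg (mul_nonneg (gfun_nonneg _) (norm_nonneg _))]
      exact mul_le_mul_of_nonneg_right (gfun_le_two _) (norm_nonneg _)
    · exact hμ.norm.const_mul 2
    · apply Filter.Eventually.of_forall
      intro y
      have hv : Filter.Tendsto (fun t : ℝ => (Real.sqrt t)⁻¹ • y) Filter.atTop
          (nhds (0 : ℝ × ℝ)) := by
        have := sqrt_inv_tendsto_zero.smul_const y
        simpa using this
      have := (gfun_tendsto.comp hv).mul_const ‖μ y‖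
      simpa using this
  apply squeeze_zero' (Filter.Eventually.of_forall fun t =>
    integral_nonneg fun x => abs_nonneg _) _ hBtend
  filter_upwards [Filter.eventually_gt_atTop (0:ℝ)] with t ht
  -- joint integrability
  have P1 : Integrable (fun p : (ℝ × ℝ) × (ℝ × ℝ) => heatK (p.1 - p.2) t * μ p.2)
      (volume.prod volume) := by
    have := hμ.convolution_integrand (ContinuousLinearMap.mul ℝ ℝ)
      (heatK_integrable ht) (μ := volume) (ν := volume)
    simp only [ContinuousLinearMap.mul_apply'] at this
    exact this.congr (Filter.Eventually.of_forall fun p => mul_comm _ _)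
  have P2 : Integrable (fun p : (ℝ × ℝ) × (ℝ × ℝ) => heatK p.1 t * μ p.2)
      (volume.prod volume) := by
    rw [← Measure.volume_eq_prod]
    rw [Measure.volume_eq_prod (ℝ × ℝ) (ℝ × ℝ)]
    exact (heatK_integrable ht).mul_prod hμ
  have Hint : Integrable (fun p : (ℝ × ℝ) × (ℝ × ℝ) =>
      (heatK (p.1 - p.2) t - heatK p.1 t) * μ p.2) (volume.prod volume) := by
    have := P1.sub P2
    exact this.congr (Filter.Eventually.of_forall fun p => by simp [Pi.sub_apply]; ring)
  -- rewrite inner integral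
  have hA : ∀ x : ℝ × ℝ, (∫ y : ℝ × ℝ, heatK (x.1 - y.1, x.2 - y.2) t * μ y)
      = ∫ y : ℝ × ℝ, (heatK (x - y) t - heatK x t) * μ y := by
    intro x
    have i1 : Integrable (fun y : ℝ × ℝ => heatK (x - y) t * μ y) := by
      apply hμ.bdd_mul
        ((heatK_cont.comp (continuous_const.sub continuous_id)).aestronglyMeasurable)
      exact Filter.Eventually.of_forall fun y => heatK_le _ ht
    have : (∫ y : ℝ × ℝ, (heatK (x - y) t - heatK x t) * μ y)
        = (∫ y : ℝ × ℝ, heatK (x - y) t * μ y) - ∫ y : ℝ × ℝ, heatK x t * μ y := by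
      simp only [sub_mul]
      exact integral_sub i1 (hμ.const_mul _)
    rw [this, integral_const_mul, h0, mul_zero, sub_zero]
    rfl
  calc (∫ x : ℝ × ℝ, |∫ y : ℝ × ℝ, heatK (x.1 - y.1, x.2 - y.2) t * μ y|)
      = ∫ x : ℝ × ℝ, ‖∫ y : ℝ × ℝ, (heatK (x - y) t - heatK x t) * μ y‖ := by
        apply integral_congr_ae (Filter.Eventually.of_forall fun x => ?_)
        rw [hA x, Real.norm_eq_abs]
    _ ≤ ∫ x : ℝ × ℝ, ∫ y : ℝ × ℝ, ‖(heatK (x - y) t - heatK x t) * μ y‖ := by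
        apply integral_mono_of_nonneg (Filter.Eventually.of_forall fun x => norm_nonneg _)
          Hint.integral_norm_prod_left
        exact Filter.Eventually.of_forall fun x => norm_integral_le_integral_norm _
    _ = ∫ y : ℝ × ℝ, ∫ x : ℝ × ℝ, ‖(heatK (x - y) t - heatK x t) * μ y‖ :=
        integral_integral_swap Hint.norm
    _ = B t := by
        apply integral_congr_ae (Filter.Eventually.of_forall fun y => ?_)
        have : ∀ x : ℝ × ℝ, ‖(heatK (x - y) t - heatK x t) * μ y‖
            = |heatK (x - y) t - heatK x t| * ‖μ y‖ := by
          intro x; rw [norm_mul, Real.norm_eq_abs]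
        rw [integral_congr_ae (Filter.Eventually.of_forall this), integral_mul_const,
          f_scale y ht]


end
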